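/- The function f(ρ;1) = (7 - 15ρ^2)/(5ρ^2 + 3)^3 is a solution on (0,1) of the ODE (1-ρ^2) f'' + (6/ρ - 8ρ) f' - (12 - 48(21 - 5ρ^2)/(5ρ^2 + 3)^2) f = 0 (i.e. equation (4.2) with λ = 1). -/

import Mathlib

/-- `f(ρ;1) = (7 - 15ρ²)/(5ρ² + 3)³` solves the spectral ODE with `λ = 1` on `(0,1)`. -/
theorem eigenfunction_lambda_one (f : ℝ → ℝ)
    (hf : ∀ ρ : ℝ, f ρ = (7 - 15 * ρ ^ 2) / (5 * ρ ^ 2 + 3) ^ 3) :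
    ∀ ρ ∈ Set.Ioo (0 : ℝ) 1,
      (1 - ρ ^ 2) * deriv (deriv f) ρ + (6 / ρ - 8 * ρ) * deriv f ρ
        - (12 - 48 * (21 - 5 * ρ ^ 2) / (5 * ρ ^ 2 + 3) ^ 2) * f ρ = 0 := by
  have hfe : f = fun x : ℝ => (7 - 15 * x ^ 2) / (5 * x ^ 2 + 3) ^ 3 := funext hf
  have key : ∀ x : ℝ, HasDerivAt f (-300 * x * (1 - x ^ 2) / (5 * x ^ 2 + 3) ^ 4) x := by
    intro x
    have hv : (5 * x ^ 2 + 3 : ℝ) ≠ 0 := by positivity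
    have hv3 : ((5 * x ^ 2 + 3 : ℝ) ^ 3) ≠ 0 := by positivity
    have hnum : HasDerivAt (fun x : ℝ => 7 - 15 * x ^ 2) (-30 * x) x := by
      have := ((hasDerivAt_pow 2 x).const_mul (15 : ℝ)).const_sub 7
      exact this.congr_deriv (by norm_num <;> ring)
    have hden : HasDerivAt (fun x : ℝ => (5 * x ^ 2 + 3) ^ 3)
        (3 * (5 * x ^ 2 + 3) ^ 2 * (10 * x)) x := by
      have hb : HasDerivAt (fun x : ℝ => 5 * x ^ 2 + 3) (10 * x) x := by
        have := ((hasDerivAt_pow 2 x).const_mul (5 : ℝ)).add_const 3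
        exact this.congr_deriv (by norm_num <;> ring)
      have := (hasDerivAt_pow 3 (5 * x ^ 2 + 3)).comp x hb
      exact this.congr_deriv (by norm_num)
    have := hnum.div hden hv3
    rw [hfe]
    refine this.congr_deriv ?_
    field_simp
    ring
  have hd1 : deriv f = fun x : ℝ => -300 * x * (1 - x ^ 2) / (5 * x ^ 2 + 3) ^ 4 :=
    funext fun x => (key x).deriv
  have key2 : ∀ x : ℝ, HasDerivAt (deriv f)
      ((-7500 * x ^ 4 + 13200 * x ^ 2 - 900) / (5 * x ^ 2 + 3) ^ 5) x := by
    intro x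
    have hv : (5 * x ^ 2 + 3 : ℝ) ≠ 0 := by positivity
    have hv4 : ((5 * x ^ 2 + 3 : ℝ) ^ 4) ≠ 0 := by positivity
    have hnum : HasDerivAt (fun x : ℝ => -300 * x * (1 - x ^ 2)) (-300 + 900 * x ^ 2) x := by
      have h1 : HasDerivAt (fun x : ℝ => -300 * x + 300 * x ^ 3)
          (-300 + 300 * (3 * x ^ 2)) x := by
        have ha := (hasDerivAt_id x).const_mul (-300 : ℝ)
        have hb := (hasDerivAt_pow 3 x).const_mul (300 : ℝ)
        have := ha.add hb
        exact this.congr_deriv (by norm_num <;> ring)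
      have heq : (fun x : ℝ => -300 * x * (1 - x ^ 2)) =
          fun x : ℝ => -300 * x + 300 * x ^ 3 := by funext y; ring
      rw [heq]; convert h1 using 1; ring
    have hden : HasDerivAt (fun x : ℝ => (5 * x ^ 2 + 3) ^ 4)
        (4 * (5 * x ^ 2 + 3) ^ 3 * (10 * x)) x := by
      have hb : HasDerivAt (fun x : ℝ => 5 * x ^ 2 + 3) (10 * x) x := by
        have := ((hasDerivAt_pow 2 x).const_mul (5 : ℝ)).add_const 3
        exact this.congr_deriv (by norm_num <;> ring)
      have := (hasDerivAt_pow 4 (5 * x ^ 2 + 3)).comp x hb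
      exact this.congr_deriv (by norm_num)
    have := hnum.div hden hv4
    rw [hd1]
    refine this.congr_deriv ?_
    field_simp
    ring
  intro ρ hρ
  have hρ0 : ρ ≠ 0 := ne_of_gt hρ.1
  have hv : (5 * ρ ^ 2 + 3 : ℝ) ≠ 0 := by positivity
  rw [(key2 ρ).deriv, hd1, hf ρ]
  field_simp
  ring
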